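/- If $s \le q$ and $r \le s$, then a sequence $(x_j)$ in a Banach space $X$ is anisotropic $(s,q,r)$-summable if and only if it is weakly $q$-summable. -/

import Mathlib

open scoped BigOperators NNReal ENNReal

noncomputable section

/-- `(xs k)` belongs to `ℓ_r(X*)`. -/
def MemLr (r : ℝ) {X : Type*} [NormedAddCommGroup X] [NormedSpace ℝ X]
    (xs : ℕ → X →L[ℝ] ℝ) : Prop :=
  Summable fun k => ‖xs k‖ ^ r

/-- The `ℓ_r(X*)` norm. -/
noncomputable def lrNorm (r : ℝ) {X : Type*} [NormedAddCommGroup X] [NormedSpace ℝ X]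
    (xs : ℕ → X →L[ℝ] ℝ) : ℝ :=
  (∑' k, ‖xs k‖ ^ r) ^ (1 / r)

/-- Weakly `q`-summable sequences. -/
def WeaklySummable (q : ℝ) {X : Type*} [NormedAddCommGroup X] [NormedSpace ℝ X]
    (x : ℕ → X) : Prop :=
  ∀ f : X →L[ℝ] ℝ, Summable fun j => |f (x j)| ^ q

/-- The weak `ℓ_q` norm. -/
noncomputable def weakNorm (q : ℝ) {X : Type*} [NormedAddCommGroup X] [NormedSpace ℝ X]
    (x : ℕ → X) : ℝ :=
  ⨆ f : {f : X →L[ℝ] ℝ // ‖f‖ ≤ 1}, (∑' j, |f.1 (x j)| ^ q) ^ (1 / q)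

/-- Anisotropic `(s,q,r)`-summable sequences. -/
def AnisoSummable (s q r : ℝ) {X : Type*} [NormedAddCommGroup X] [NormedSpace ℝ X]
    (x : ℕ → X) : Prop :=
  ∀ xs : ℕ → X →L[ℝ] ℝ, MemLr r xs →
    (∀ j, Summable fun k => |xs k (x j)| ^ s) ∧
      Summable fun j => (∑' k, |xs k (x j)| ^ s) ^ (q / s)

/-- The anisotropic `(s,q,r)` norm. -/
noncomputable def anisoNorm (s q r : ℝ) {X : Type*} [NormedAddCommGroup X] [NormedSpace ℝ X]
    (x : ℕ → X) : ℝ :=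
  ⨆ xs : {xs : ℕ → X →L[ℝ] ℝ // MemLr r xs ∧ lrNorm r xs ≤ 1},
    (∑' j, (∑' k, |xs.1 k (x j)| ^ s) ^ (q / s)) ^ (1 / q)

-- AUX (already compiled) --
lemma my_iSup_rpow {ι : Sort*} {y : ℝ} (hy : 0 < y) (f : ι → ℝ≥0∞) :
    (⨆ i, f i) ^ y = ⨆ i, f i ^ y := by
  have h := (ENNReal.orderIsoRpow y hy).map_iSup f
  simp only [ENNReal.orderIsoRpow_apply] at h
  exact h

lemma my_two_term {p : ℝ} (hp : 1 ≤ p) (f g : ℕ → ℝ≥0∞) :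
    (∑' j, (f j + g j) ^ p) ^ (1 / p) ≤
      (∑' j, f j ^ p) ^ (1 / p) + (∑' j, g j ^ p) ^ (1 / p) := by
  have hp0 : 0 < p := lt_of_lt_of_le one_pos hp
  have h1p : (0:ℝ) < 1 / p := by positivity
  rw [show (∑' j, (f j + g j) ^ p) = ⨆ s : Finset ℕ, ∑ j ∈ s, (f j + g j) ^ p from
    ENNReal.tsum_eq_iSup_sum, my_iSup_rpow h1p]
  refine iSup_le fun s => ?_
  refine (ENNReal.Lp_add_le s f g hp).trans (add_le_add ?_ ?_) <;>
    exact ENNReal.rpow_le_rpow (ENNReal.sum_le_tsum s) h1p.le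

lemma my_tsum_iSup {h : ℕ → ℕ → ℝ≥0∞} (hm : ∀ j, Monotone fun n => h n j) :
    ∑' j, ⨆ n, h n j = ⨆ n, ∑' j, h n j := by
  refine le_antisymm ?_ (iSup_le fun n => ENNReal.tsum_le_tsum fun j => le_iSup (fun n => h n j) n)
  rw [ENNReal.tsum_eq_iSup_sum]
  refine iSup_le fun F => ?_
  rw [ENNReal.finsetSum_iSup_of_monotone (f := fun j n => h n j) hm]
  exact iSup_le fun n => le_iSup_of_le n (ENNReal.sum_le_tsum F)

lemma my_minkowski {p : ℝ} (hp : 1 ≤ p) (A : ℕ → ℕ → ℝ≥0∞) :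
    (∑' j, (∑' k, A k j) ^ p) ^ (1 / p) ≤ ∑' k, (∑' j, A k j ^ p) ^ (1 / p) := by
  have hp0 : 0 < p := lt_of_lt_of_le one_pos hp
  have h1p : (0:ℝ) < 1 / p := by positivity
  have hfin : ∀ n : ℕ,
      (∑' j, (∑ k ∈ Finset.range n, A k j) ^ p) ^ (1 / p) ≤
        ∑ k ∈ Finset.range n, (∑' j, A k j ^ p) ^ (1 / p) := by
    intro n
    induction n with
    | zero =>
      simp only [Finset.range_zero, Finset.sum_empty]
      rw [ENNReal.zero_rpow_of_pos hp0, tsum_zero, ENNReal.zero_rpow_of_pos h1p]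
    | succ n ih =>
      simp only [Finset.sum_range_succ]
      exact le_trans (my_two_term hp _ _) (add_le_add ih le_rfl)
  have hmono : ∀ j, Monotone fun n => (∑ k ∈ Finset.range n, A k j) ^ p := by
    intro j m n hmn
    exact ENNReal.rpow_le_rpow
      (Finset.sum_le_sum_of_subset (Finset.range_subset_range.2 hmn)) hp0.le
  calc (∑' j, (∑' k, A k j) ^ p) ^ (1 / p)
      = (∑' j, ⨆ n, (∑ k ∈ Finset.range n, A k j) ^ p) ^ (1 / p) := by
        congr 1; refine tsum_congr fun j => ?_
        rw [ENNReal.tsum_eq_iSup_nat, my_iSup_rpow hp0]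
    _ = (⨆ n, ∑' j, (∑ k ∈ Finset.range n, A k j) ^ p) ^ (1 / p) := by
        rw [my_tsum_iSup hmono]
    _ = ⨆ n, (∑' j, (∑ k ∈ Finset.range n, A k j) ^ p) ^ (1 / p) := my_iSup_rpow h1p _
    _ ≤ ∑' k, (∑' j, A k j ^ p) ^ (1 / p) := by
        refine iSup_le fun n => (hfin n).trans ?_
        exact ENNReal.sum_le_tsum _

section UB
variable {X : Type*} [NormedAddCommGroup X] [NormedSpace ℝ X]

def mySingleCLM (p : ℝ≥0∞) [Fact (1 ≤ p)] (hp : 0 < p.toReal) (j : ℕ) :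
    ℝ →L[ℝ] lp (fun _ : ℕ => ℝ) p :=
  LinearMap.mkContinuous
    { toFun := fun a => lp.single p j a
      map_add' := fun a b => by
        ext k
        by_cases h : k = j
        · subst h; simp [lp.single_apply_self]
        · simp [lp.single_apply_ne p j _ h]
      map_smul' := fun c a => by
        ext k
        by_cases h : k = j
        · subst h; simp [lp.single_apply_self]
        · simp [lp.single_apply_ne p j _ h, Pi.single_apply, h] }
    1 fun a => by
      have h := lp.norm_single (E := fun _ : ℕ => ℝ) (zero_lt_one.trans_le (Fact.out : 1 ≤ p)) j a
      simp only [LinearMap.coe_mk, AddHom.coe_mk]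
      rw [h]
      simp

lemma my_unif_bound {q : ℝ} (hq : 1 ≤ q) {x : ℕ → X}
    (hx : ∀ f : X →L[ℝ] ℝ, Summable fun j => |f (x j)| ^ q) :
    ∃ C : ℝ, 0 ≤ C ∧ ∀ f : X →L[ℝ] ℝ, ∑' j, |f (x j)| ^ q ≤ (C * ‖f‖) ^ q := by
  have hq0 : 0 < q := lt_of_lt_of_le one_pos hq
  haveI : Fact (1 ≤ ENNReal.ofReal q) := ⟨by
    rw [← ENNReal.ofReal_one]; exact ENNReal.ofReal_le_ofReal hq⟩
  set p : ℝ≥0∞ := ENNReal.ofReal q with hp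
  have hptoReal : p.toReal = q := ENNReal.toReal_ofReal hq0.le
  have hppos : 0 < p.toReal := by rw [hptoReal]; exact hq0
  set T : ℕ → (X →L[ℝ] ℝ) →L[ℝ] lp (fun _ : ℕ => ℝ) p := fun n =>
    ∑ j ∈ Finset.range n, (mySingleCLM p hppos j).comp (ContinuousLinearMap.apply ℝ ℝ (x j))
    with hT
  have hTapp : ∀ n f, T n f = ∑ j ∈ Finset.range n, lp.single p j (f (x j)) := by
    intro n f
    rw [hT]
    simp only [ContinuousLinearMap.coe_sum', Finset.sum_apply,
      ContinuousLinearMap.coe_comp', Function.comp_apply]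
    exact Finset.sum_congr rfl fun j _ => rfl
  have hTnorm : ∀ n (f : X →L[ℝ] ℝ),
      ‖T n f‖ ^ q = ∑ j ∈ Finset.range n, |f (x j)| ^ q := by
    intro n f
    have h := lp.norm_sum_single (p := p) hppos (fun j => f (x j)) (Finset.range n)
    rw [hptoReal] at h
    rw [hTapp, h]
    simp [Real.norm_eq_abs]
  have hbdd : ∀ f : X →L[ℝ] ℝ, ∃ M, ∀ n, ‖T n f‖ ≤ M := by
    intro f
    refine ⟨(∑' j, |f (x j)| ^ q) ^ (1 / q), fun n => ?_⟩
    have h1 : ‖T n f‖ ^ q ≤ ∑' j, |f (x j)| ^ q := by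
      rw [hTnorm n f]
      exact (hx f).sum_le_tsum _ (fun j _ => Real.rpow_nonneg (abs_nonneg _) _)
    have := Real.rpow_le_rpow (Real.rpow_nonneg (norm_nonneg _) _) h1 (by positivity : (0:ℝ) ≤ 1/q)
    rwa [← Real.rpow_mul (norm_nonneg _), mul_one_div_cancel hq0.ne', Real.rpow_one] at this
  obtain ⟨C, hC⟩ := banach_steinhaus hbdd
  refine ⟨max C 0, le_max_right _ _, fun f => ?_⟩
  refine Summable.tsum_le_of_sum_range_le (hx f) fun n => ?_
  have h1 : ‖T n f‖ ≤ max C 0 * ‖f‖ :=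
    ((T n).le_opNorm f).trans (by
      gcongr
      exact (hC n).trans (le_max_left _ _))
  have := Real.rpow_le_rpow (norm_nonneg _) h1 hq0.le
  rw [hTnorm n f] at this
  exact this

end UB

theorem stmt3 {X : Type*} [NormedAddCommGroup X] [NormedSpace ℝ X] [CompleteSpace X]
    {s q r : ℝ} (hr : 1 ≤ r) (hrs : r ≤ s) (hs : 1 ≤ s) (hsq : s ≤ q)
    (x : ℕ → X) :
    AnisoSummable s q r x ↔ WeaklySummable q x := by
  have hs0 : (0:ℝ) < s := lt_of_lt_of_le one_pos hs
  have hr0 : (0:ℝ) < r := lt_of_lt_of_le one_pos hr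
  have hq0 : (0:ℝ) < q := lt_of_lt_of_le hs0 hsq
  have hq1 : (1:ℝ) ≤ q := hs.trans hsq
  constructor
  · -- Aniso → Weak
    intro hA f
    classical
    set xs : ℕ → X →L[ℝ] ℝ := fun k => if k = 0 then f else 0 with hxs
    have hmem : MemLr r xs := by
      refine summable_of_ne_finset_zero (s := {0}) fun k hk => ?_
      have h0 : xs k = 0 := if_neg (by simpa using hk)
      rw [h0, norm_zero, Real.zero_rpow hr0.ne']
    obtain ⟨-, h2⟩ := hA xs hmem
    have heq : (fun j => (∑' k, |xs k (x j)| ^ s) ^ (q / s)) = fun j => |f (x j)| ^ q := by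
      funext j
      have h3 : ∑' k, |xs k (x j)| ^ s = |f (x j)| ^ s := by
        rw [tsum_eq_single 0 (fun b hb => by
          simp [hxs, if_neg hb, Real.zero_rpow hs0.ne'])]
        simp [hxs]
      rw [h3, ← Real.rpow_mul (abs_nonneg _), show s * (q / s) = q by field_simp]
    rwa [heq] at h2
  · -- Weak → Aniso
    intro hx xs hmem
    -- ℓ_s summability of the norms
    have hsum_s : Summable fun k => ‖xs k‖ ^ s := by
      have ht : Filter.Tendsto (fun k => ‖xs k‖ ^ r) Filter.atTop (nhds 0) :=
        hmem.tendsto_atTop_zero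
      have hev : ∀ᶠ k in Filter.atTop, ‖xs k‖ ^ s ≤ ‖xs k‖ ^ r := by
        filter_upwards [ht.eventually_lt_const one_pos] with k hk
        have hle1 : ‖xs k‖ ≤ 1 := by
          by_contra hgt
          push_neg at hgt
          exact absurd (Real.one_le_rpow hgt.le hr0.le) (not_le.2 hk)
        exact Real.rpow_le_rpow_of_exponent_ge' (norm_nonneg _) hle1 hr0.le hrs
      have hbig : (fun k => ‖xs k‖ ^ s) =O[Filter.atTop] fun k => ‖xs k‖ ^ r := by
        refine Asymptotics.IsBigO.of_bound 1 ?_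
        filter_upwards [hev] with k hk
        rw [one_mul, Real.norm_eq_abs, Real.norm_eq_abs,
          abs_of_nonneg (Real.rpow_nonneg (norm_nonneg _) _),
          abs_of_nonneg (Real.rpow_nonneg (norm_nonneg _) _)]
        exact hk
      exact summable_of_isBigO_nat hmem hbig
    have ha : ∀ j, Summable fun k => |xs k (x j)| ^ s := by
      intro j
      refine Summable.of_nonneg_of_le (fun k => Real.rpow_nonneg (abs_nonneg _) _)
        (fun k => ?_) (hsum_s.mul_right (‖x j‖ ^ s))
      calc |xs k (x j)| ^ s ≤ (‖xs k‖ * ‖x j‖) ^ s := by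
            rw [← Real.norm_eq_abs]
            exact Real.rpow_le_rpow (norm_nonneg _) ((xs k).le_opNorm (x j)) hs0.le
        _ = ‖xs k‖ ^ s * ‖x j‖ ^ s := Real.mul_rpow (norm_nonneg _) (norm_nonneg _)
    refine ⟨ha, ?_⟩
    obtain ⟨C, hC0, hCb⟩ := my_unif_bound hq1 hx
    set p : ℝ := q / s with hpdef
    have hp1 : (1:ℝ) ≤ p := (one_le_div hs0).2 hsq
    have hp0 : (0:ℝ) < p := lt_of_lt_of_le one_pos hp1
    set aN : ℕ → ℕ → ℝ≥0 := fun k j => ‖xs k (x j)‖₊ ^ s with haN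
    have hcoe : ∀ k j, ((aN k j : ℝ)) = |xs k (x j)| ^ s := by
      intro k j
      rw [haN]
      simp [NNReal.coe_rpow, Real.norm_eq_abs]
    have haNsum : ∀ j, Summable fun k => aN k j := by
      intro j
      rw [← NNReal.summable_coe]
      exact (ha j).congr fun k => (hcoe k j).symm
    set A : ℕ → ℕ → ℝ≥0∞ := fun k j => ((aN k j : ℝ≥0) : ℝ≥0∞) with hA
    -- summability of ∑_j |xs k (x j)|^q in ℝ≥0
    have hqsum : ∀ k, Summable fun j => (‖xs k (x j)‖₊ ^ q : ℝ≥0) := by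
      intro k
      rw [← NNReal.summable_coe]
      exact (hx (xs k)).congr fun j => by simp [NNReal.coe_rpow, Real.norm_eq_abs]
    -- the key term bound
    have hterm : ∀ k, (∑' j, A k j ^ p) ^ (1 / p) ≤ ENNReal.ofReal ((C * ‖xs k‖) ^ s) := by
      intro k
      have h1 : ∀ j, A k j ^ p = ((‖xs k (x j)‖₊ ^ q : ℝ≥0) : ℝ≥0∞) := by
        intro j
        show (((‖xs k (x j)‖₊ ^ s : ℝ≥0)) : ℝ≥0∞) ^ p = ((‖xs k (x j)‖₊ ^ q : ℝ≥0) : ℝ≥0∞)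
        rw [ENNReal.coe_rpow_of_nonneg _ hs0.le, ← ENNReal.rpow_mul,
          show s * p = q by rw [hpdef]; field_simp,
          ← ENNReal.coe_rpow_of_nonneg _ hq0.le]
      rw [tsum_congr h1, ← ENNReal.coe_tsum (hqsum k)]
      have hu : ((∑' j, (‖xs k (x j)‖₊ ^ q : ℝ≥0) : ℝ≥0) : ℝ≥0∞) ≤
          ENNReal.ofReal ((C * ‖xs k‖) ^ q) := by
        rw [← ENNReal.ofReal_coe_nnreal]
        refine ENNReal.ofReal_le_ofReal ?_
        rw [NNReal.coe_tsum]
        calc ∑' j, ((‖xs k (x j)‖₊ ^ q : ℝ≥0) : ℝ)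
            = ∑' j, |xs k (x j)| ^ q :=
              tsum_congr fun j => by simp [NNReal.coe_rpow, Real.norm_eq_abs]
          _ ≤ (C * ‖xs k‖) ^ q := hCb (xs k)
      calc ((∑' j, (‖xs k (x j)‖₊ ^ q : ℝ≥0) : ℝ≥0) : ℝ≥0∞) ^ (1 / p)
          ≤ (ENNReal.ofReal ((C * ‖xs k‖) ^ q)) ^ (1 / p) :=
            ENNReal.rpow_le_rpow hu (by positivity)
        _ = ENNReal.ofReal (((C * ‖xs k‖) ^ q) ^ (1 / p)) :=
            ENNReal.ofReal_rpow_of_nonneg (by positivity) (by positivity)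
        _ = ENNReal.ofReal ((C * ‖xs k‖) ^ s) := by
            rw [← Real.rpow_mul (by positivity),
              show q * (1 / p) = s by rw [hpdef]; field_simp]
    have hsumCs : Summable fun k => (C * ‖xs k‖) ^ s :=
      (hsum_s.mul_left (C ^ s)).congr fun k =>
        (Real.mul_rpow hC0 (norm_nonneg _)).symm
    have hrhs : (∑' k, (∑' j, A k j ^ p) ^ (1 / p)) ≤
        ENNReal.ofReal (∑' k, (C * ‖xs k‖) ^ s) := by
      rw [ENNReal.ofReal_tsum_of_nonneg (fun k => by positivity) hsumCs]
      exact ENNReal.tsum_le_tsum hterm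
    have hmain : (∑' j, (∑' k, A k j) ^ p) ≠ ⊤ := by
      intro htop
      have hlhs := (my_minkowski hp1 A).trans hrhs
      rw [htop, ENNReal.top_rpow_of_pos (by positivity)] at hlhs
      exact absurd (hlhs.trans_lt ENNReal.ofReal_lt_top) (lt_irrefl _)
    -- convert back to ℝ
    have hsumN : Summable fun j => ((∑' k, aN k j) ^ p : ℝ≥0) := by
      rw [← ENNReal.tsum_coe_ne_top_iff_summable]
      have : ∀ j, (((∑' k, aN k j) ^ p : ℝ≥0) : ℝ≥0∞) = (∑' k, A k j) ^ p := by
        intro j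
        rw [ENNReal.coe_rpow_of_nonneg _ hp0.le, ENNReal.coe_tsum (haNsum j)]
      rw [tsum_congr this]
      exact hmain
    have := NNReal.summable_coe.2 hsumN
    refine this.congr fun j => ?_
    have h5 : (∑' k, ((aN k j : ℝ))) = ∑' k, |xs k (x j)| ^ s := tsum_congr fun k => hcoe k j
    rw [NNReal.coe_rpow, NNReal.coe_tsum, h5]

end
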